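/- Every infinite family F of closed balls in ℝ^d satisfies exactly one of: (1) F can be pierced by a finite set of points; (2) F contains an infinite subfamily of pairwise disjoint balls. -/
import Mathlib

open Metric Set
set_option linter.unusedSectionVars false


variable {E : Type*} [NormedAddCommGroup E] [NormedSpace ℝ E] [ProperSpace E]

/-- A family of balls (center–radius pairs) is pierced by a finite set of points. -/
def PiercedBy (G : Set (E × ℝ)) : Prop :=
  ∃ P : Set E, P.Finite ∧ ∀ b ∈ G, ∃ p ∈ P, p ∈ Metric.closedBall b.1 b.2

lemma piercedBy_mono {G G' : Set (E × ℝ)} (h : G ⊆ G') (h' : PiercedBy G') : PiercedBy G := by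
  obtain ⟨P, hf, hp⟩ := h'
  exact ⟨P, hf, fun b hb => hp b (h hb)⟩

lemma piercedBy_union {G G' : Set (E × ℝ)} (h : PiercedBy G) (h' : PiercedBy G') :
    PiercedBy (G ∪ G') := by
  obtain ⟨P, hf, hp⟩ := h
  obtain ⟨P', hf', hp'⟩ := h'
  refine ⟨P ∪ P', hf.union hf', ?_⟩
  rintro b (hb | hb)
  · obtain ⟨p, h1, h2⟩ := hp b hb; exact ⟨p, Or.inl h1, h2⟩
  · obtain ⟨p, h1, h2⟩ := hp' b hb; exact ⟨p, Or.inr h1, h2⟩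

lemma piercedBy_empty : PiercedBy (∅ : Set (E × ℝ)) := ⟨∅, finite_empty, by simp⟩

lemma piercedBy_biUnion {ι : Type*} (t : Finset ι) (G : ι → Set (E × ℝ))
    (h : ∀ i ∈ t, PiercedBy (G i)) : PiercedBy (⋃ i ∈ t, G i) := by
  classical
  induction t using Finset.induction_on with
  | empty => simpa using (piercedBy_empty : PiercedBy (∅ : Set (E × ℝ)))
  | @insert a s hni ih =>
    rw [Finset.set_biUnion_insert]
    exact piercedBy_union (h a (Finset.mem_insert_self a s))
      (ih fun i hi => h i (Finset.mem_insert_of_mem hi))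



lemma exists_inner_ball {δ R : ℝ} (hδ : 0 < δ) (b : E × ℝ) (hb2 : δ ≤ b.2) {w : E}
    (hw1 : w ∈ Metric.closedBall b.1 b.2) (hw2 : w ∈ Metric.closedBall (0:E) R) :
    ∃ z : E, z ∈ Metric.closedBall (0:E) (R + δ) ∧
      Metric.closedBall z δ ⊆ Metric.closedBall b.1 b.2 := by
  have hw2' : dist w (0:E) ≤ R := mem_closedBall.1 hw2
  have hw1' : dist w b.1 ≤ b.2 := mem_closedBall.1 hw1
  rcases le_or_gt (dist w b.1) δ with h | h
  · refine ⟨b.1, ?_, Metric.closedBall_subset_closedBall hb2⟩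
    simp only [Metric.mem_closedBall]
    calc dist b.1 (0:E) ≤ dist b.1 w + dist w 0 := dist_triangle _ _ _
      _ ≤ δ + R := add_le_add (by rwa [dist_comm]) hw2'
      _ = R + δ := add_comm _ _
  · set D := dist w b.1 with hD
    have hD0 : 0 < D := hδ.trans h
    refine ⟨w + (δ / D) • (b.1 - w), ?_, ?_⟩
    · have hzw : dist (w + (δ / D) • (b.1 - w)) w = δ := by
        rw [dist_eq_norm]
        have h1 : w + (δ / D) • (b.1 - w) - w = (δ / D) • (b.1 - w) := by abel
        rw [h1, norm_smul, Real.norm_eq_abs, abs_of_pos (div_pos hδ hD0)]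
        have h2 : ‖b.1 - w‖ = D := by rw [hD, dist_comm, dist_eq_norm]
        rw [h2, div_mul_cancel₀ _ hD0.ne']
      simp only [Metric.mem_closedBall]
      calc dist (w + (δ / D) • (b.1 - w)) (0:E)
          ≤ dist (w + (δ / D) • (b.1 - w)) w + dist w 0 := dist_triangle _ _ _
        _ ≤ δ + R := add_le_add hzw.le hw2'
        _ = R + δ := add_comm _ _
    · have hzb : dist (w + (δ / D) • (b.1 - w)) b.1 = D - δ := by
        rw [dist_eq_norm]
        have h1 : w + (δ / D) • (b.1 - w) - b.1 = (1 - δ / D) • (w - b.1) := by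
          rw [sub_smul, one_smul, smul_sub, smul_sub]
          abel
        rw [h1, norm_smul, Real.norm_eq_abs]
        have hle : δ / D ≤ 1 := (div_le_one hD0).2 h.le
        rw [abs_of_nonneg (by linarith)]
        have h2 : ‖w - b.1‖ = D := by rw [hD, dist_eq_norm]
        rw [h2, sub_mul, one_mul, div_mul_cancel₀ _ hD0.ne']
      intro q hq
      simp only [Metric.mem_closedBall] at hq ⊢
      calc dist q b.1 ≤ dist q (w + (δ / D) • (b.1 - w)) + dist (w + (δ / D) • (b.1 - w)) b.1 :=
            dist_triangle _ _ _
        _ ≤ δ + (D - δ) := add_le_add hq hzb.le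
        _ = D := by ring
        _ ≤ b.2 := hw1'

lemma piercedBy_big {δ R : ℝ} (hδ : 0 < δ) :
    PiercedBy {b : E × ℝ | δ ≤ b.2 ∧
      ¬ Disjoint (Metric.closedBall b.1 b.2) (Metric.closedBall (0:E) R)} := by
  have hK : IsCompact (Metric.closedBall (0:E) (R + δ)) := isCompact_closedBall _ _
  have hcov : Metric.closedBall (0:E) (R + δ) ⊆ ⋃ z : E, Metric.ball z δ := by
    intro q _; exact mem_iUnion.2 ⟨q, mem_ball_self hδ⟩
  obtain ⟨t, ht⟩ := hK.elim_finite_subcover (fun z : E => Metric.ball z δ)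
    (fun _ => isOpen_ball) hcov
  refine ⟨↑t, t.finite_toSet, ?_⟩
  rintro b ⟨hb2, hbd⟩
  obtain ⟨w, hw1, hw2⟩ := Set.not_disjoint_iff.1 hbd
  obtain ⟨z, hz1, hz2⟩ := exists_inner_ball hδ b hb2 hw1 hw2
  obtain ⟨p, hp⟩ := mem_iUnion.1 (ht hz1)
  obtain ⟨hpt, hpz⟩ := mem_iUnion.1 hp
  exact ⟨p, hpt, hz2 (mem_closedBall.2 (by rw [dist_comm]; exact (mem_ball.1 hpz).le))⟩

/-- From a sequence of pairwise disjoint balls in `F`, get an infinite disjoint subfamily. -/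
lemma disjoint_family_of_seq {F : Set (E × ℝ)} (f : ℕ → E × ℝ)
    (hmem : ∀ n, f n ∈ F) (hpos : ∀ n, 0 ≤ (f n).2)
    (hd : ∀ n m, n < m →
      Disjoint (Metric.closedBall (f n).1 (f n).2) (Metric.closedBall (f m).1 (f m).2)) :
    ∃ S ⊆ F, S.Infinite ∧ S.Pairwise (fun b b' =>
      Disjoint (Metric.closedBall b.1 b.2) (Metric.closedBall b'.1 b'.2)) := by
  have hinj : Function.Injective f := by
    intro n m hnm
    by_contra hne
    rcases Nat.lt_or_ge n m with h | h
    · have := hd n m h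
      rw [hnm] at this
      exact (Set.disjoint_left.1 this (mem_closedBall_self (hpos m)))
        (mem_closedBall_self (hpos m))
    · have hlt : m < n := lt_of_le_of_ne h (Ne.symm hne)
      have := hd m n hlt
      rw [hnm] at this
      exact (Set.disjoint_left.1 this (mem_closedBall_self (hpos m)))
        (mem_closedBall_self (hpos m))
  refine ⟨Set.range f, by rintro _ ⟨n, rfl⟩; exact hmem n, Set.infinite_range_of_injective hinj, ?_⟩
  rintro _ ⟨n, rfl⟩ _ ⟨m, rfl⟩ hne
  have hnm : n ≠ m := fun h => hne (by rw [h])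
  rcases Nat.lt_or_ge n m with h | h
  · exact hd n m h
  · exact (hd m n (lt_of_le_of_ne h (Ne.symm hnm))).symm

/-- Case of balls escaping to infinity. -/
lemma seq_escape {F : Set (E × ℝ)} (hr : ∀ b ∈ F, 0 < b.2)
    (h : ∀ R : ℝ, ∃ b ∈ F, Disjoint (Metric.closedBall b.1 b.2) (Metric.closedBall (0:E) R)) :
    ∃ S ⊆ F, S.Infinite ∧ S.Pairwise (fun b b' =>
      Disjoint (Metric.closedBall b.1 b.2) (Metric.closedBall b'.1 b'.2)) := by
  classical
  choose g hg1 hg2 using h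
  set u : ℕ → (E × ℝ) × ℝ :=
    fun n => Nat.rec (g 0, ‖(g 0).1‖ + (g 0).2)
      (fun _ s => (g s.2, max s.2 (‖(g s.2).1‖ + (g s.2).2))) n with hu
  have hu0 : u 0 = (g 0, ‖(g 0).1‖ + (g 0).2) := rfl
  have hus : ∀ n, u (n + 1) = (g (u n).2, max (u n).2 (‖(g (u n).2).1‖ + (g (u n).2).2)) :=
    fun n => rfl
  have hmem : ∀ n, (u n).1 ∈ F := by
    intro n; cases n with
    | zero => exact hg1 0
    | succ k => rw [hus k]; exact hg1 _
  have hball : ∀ n, Metric.closedBall (u n).1.1 (u n).1.2 ⊆ Metric.closedBall (0:E) (u n).2 := by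
    intro n
    have key : ∀ (b : E × ℝ) (r : ℝ), ‖b.1‖ + b.2 ≤ r →
        Metric.closedBall b.1 b.2 ⊆ Metric.closedBall (0:E) r := by
      intro b r hbr q hq
      simp only [Metric.mem_closedBall] at hq ⊢
      calc dist q 0 ≤ dist q b.1 + dist b.1 0 := dist_triangle _ _ _
        _ ≤ b.2 + ‖b.1‖ := add_le_add hq (by rw [dist_zero_right])
        _ ≤ r := by linarith
    cases n with
    | zero => exact key _ _ le_rfl
    | succ k => rw [hus k]; exact key _ _ (le_max_right _ _)
  have hmono : ∀ n, (u n).2 ≤ (u (n + 1)).2 := by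
    intro n; rw [hus n]; exact le_max_left _ _
  have hmono' : Monotone fun n => (u n).2 := monotone_nat_of_le_succ hmono
  have hdisj : ∀ n m, n < m →
      Disjoint (Metric.closedBall (u n).1.1 (u n).1.2)
        (Metric.closedBall (u m).1.1 (u m).1.2) := by
    intro n m hnm
    obtain ⟨k, rfl⟩ : ∃ k, m = k + 1 := ⟨m - 1, by omega⟩
    have h1 : Disjoint (Metric.closedBall (u (k+1)).1.1 (u (k+1)).1.2)
        (Metric.closedBall (0:E) (u k).2) := by
      rw [hus k]; exact hg2 _
    have h2 : Metric.closedBall (u n).1.1 (u n).1.2 ⊆ Metric.closedBall (0:E) (u k).2 :=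
      (hball n).trans (Metric.closedBall_subset_closedBall (hmono' (by omega)))
    exact (h1.mono_right h2).symm
  exact disjoint_family_of_seq (fun n => (u n).1) hmem
    (fun n => (hr _ (hmem n)).le) hdisj

/-- Case of balls shrinking to a heavy point `p`. -/
lemma seq_shrink {F : Set (E × ℝ)} (hr : ∀ b ∈ F, 0 < b.2) (p : E)
    (h : ∀ ε : ℝ, 0 < ε → ∃ b ∈ F, Metric.closedBall b.1 b.2 ⊆ Metric.closedBall p ε ∧
      p ∉ Metric.closedBall b.1 b.2) :
    ∃ S ⊆ F, S.Infinite ∧ S.Pairwise (fun b b' =>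
      Disjoint (Metric.closedBall b.1 b.2) (Metric.closedBall b'.1 b'.2)) := by
  classical
  obtain ⟨g, hg⟩ : ∃ g : ℝ → E × ℝ, ∀ ε : ℝ, 0 < ε → g ε ∈ F ∧
      Metric.closedBall (g ε).1 (g ε).2 ⊆ Metric.closedBall p ε ∧
      p ∉ Metric.closedBall (g ε).1 (g ε).2 := by
    refine ⟨fun ε => if hε : 0 < ε then (h ε hε).choose else (h 1 one_pos).choose, ?_⟩
    intro ε hε
    simp only [dif_pos hε]
    obtain ⟨h1, h2, h3⟩ := (h ε hε).choose_spec
    exact ⟨h1, h2, h3⟩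
  set η : E × ℝ → ℝ := fun b => dist p b.1 - b.2 with hη
  set f : ℕ → E × ℝ := fun n => Nat.rec (g 1) (fun _ b => g (η b / 2)) n with hf
  have hf0 : f 0 = g 1 := rfl
  have hfs : ∀ n, f (n + 1) = g (η (f n) / 2) := fun n => rfl
  -- basic invariant: f n ∈ F and η (f n) > 0
  have hinv : ∀ n, f n ∈ F ∧ 0 < η (f n) := by
    have hpos_of : ∀ b : E × ℝ, p ∉ Metric.closedBall b.1 b.2 → 0 < η b := by
      intro b hb
      simp only [Metric.mem_closedBall, not_le] at hb
      simp only [hη]; linarith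
    intro n
    induction n with
    | zero =>
      obtain ⟨h1, _, h3⟩ := hg 1 one_pos
      exact ⟨h1, hpos_of _ h3⟩
    | succ k ih =>
      have hhalf : 0 < η (f k) / 2 := half_pos ih.2
      obtain ⟨h1, _, h3⟩ := hg _ hhalf
      rw [hfs k]
      exact ⟨h1, hpos_of _ h3⟩
  have hsub : ∀ n, Metric.closedBall (f (n+1)).1 (f (n+1)).2 ⊆
      Metric.closedBall p (η (f n) / 2) := by
    intro n
    have hhalf : 0 < η (f n) / 2 := half_pos (hinv n).2
    rw [hfs n]; exact (hg _ hhalf).2.1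
  have hdec : ∀ n, η (f (n + 1)) ≤ η (f n) / 2 := by
    intro n
    have hc : (f (n+1)).1 ∈ Metric.closedBall p (η (f n) / 2) :=
      hsub n (mem_closedBall_self (hr _ (hinv (n+1)).1).le)
    simp only [Metric.mem_closedBall] at hc
    have : dist p (f (n+1)).1 ≤ η (f n) / 2 := by rwa [dist_comm]
    have hb2 := (hr _ (hinv (n+1)).1)
    simp only [hη]; linarith
  have hanti : ∀ n m, n ≤ m → η (f m) ≤ η (f n) := by
    intro n m hnm
    induction m with
    | zero => simp_all
    | succ k ih =>
      rcases Nat.lt_or_ge n (k+1) with hlt | hge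
      · exact (hdec k).trans ((half_le_self (hinv k).2.le).trans (ih (by omega)))
      · have : n = k + 1 := by omega
        subst this; rfl
  have hdisj : ∀ n m, n < m →
      Disjoint (Metric.closedBall (f n).1 (f n).2) (Metric.closedBall (f m).1 (f m).2) := by
    intro n m hnm
    obtain ⟨k, rfl⟩ : ∃ k, m = k + 1 := ⟨m - 1, by omega⟩
    have hsubk : Metric.closedBall (f (k+1)).1 (f (k+1)).2 ⊆
        Metric.closedBall p (η (f n) / 2) := by
      refine (hsub k).trans (Metric.closedBall_subset_closedBall ?_)
      exact div_le_div_of_nonneg_right (hanti n k (by omega)) (by norm_num)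
    rw [Set.disjoint_left]
    intro q hq hq'
    have h1 : dist q p ≤ (dist p (f n).1 - (f n).2) / 2 := mem_closedBall.1 (hsubk hq')
    have h2 : dist q (f n).1 ≤ (f n).2 := mem_closedBall.1 hq
    have h3 : dist p (f n).1 ≤ dist p q + dist q (f n).1 := dist_triangle _ _ _
    have h4 : 0 < dist p (f n).1 - (f n).2 := (hinv n).2
    rw [dist_comm p q] at h3
    linarith
  exact disjoint_family_of_seq f (fun n => (hinv n).1) (fun n => (hr _ (hinv n).1).le) hdisj

lemma dichotomy_aux {E : Type*} [NormedAddCommGroup E] [NormedSpace ℝ E] [ProperSpace E]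
    (F : Set (E × ℝ)) (hinf : F.Infinite) (hr : ∀ b ∈ F, 0 < b.2) :
    Xor'
      (∃ P : Set E, P.Finite ∧
        ∀ b ∈ F, ∃ p ∈ P, p ∈ Metric.closedBall b.1 b.2)
      (∃ S ⊆ F, S.Infinite ∧
        S.Pairwise (fun b b' =>
          Disjoint (Metric.closedBall b.1 b.2) (Metric.closedBall b'.1 b'.2))) := by
  classical
  -- the two alternatives cannot hold simultaneously
  have hnot : ¬ (PiercedBy F ∧ (∃ S ⊆ F, S.Infinite ∧
      S.Pairwise (fun b b' =>
        Disjoint (Metric.closedBall b.1 b.2) (Metric.closedBall b'.1 b'.2)))) := by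
    rintro ⟨⟨P, hPfin, hP⟩, S, hSF, hSinf, hSdisj⟩
    have hchoice : ∀ b : E × ℝ, b ∈ S → ∃ p, p ∈ P ∧ p ∈ Metric.closedBall b.1 b.2 := by
      intro b hb
      obtain ⟨p, h1, h2⟩ := hP b (hSF hb)
      exact ⟨p, h1, h2⟩
    set φ : E × ℝ → E := fun b =>
      if h : ∃ p, p ∈ P ∧ p ∈ Metric.closedBall b.1 b.2 then h.choose else 0 with hφ
    have hmap : ∀ b ∈ S, φ b ∈ P ∧ φ b ∈ Metric.closedBall b.1 b.2 := by
      intro b hb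
      simp only [hφ, dif_pos (hchoice b hb)]
      exact (hchoice b hb).choose_spec
    have hinjOn : Set.InjOn φ S := by
      intro a ha b hb hab
      by_contra hne
      have hd := hSdisj ha hb hne
      exact (Set.disjoint_left.1 hd (hmap a ha).2) (hab ▸ (hmap b hb).2)
    have himg : φ '' S ⊆ P := by
      rintro _ ⟨b, hb, rfl⟩; exact (hmap b hb).1
    exact hSinf (Set.Finite.of_finite_image (hPfin.subset himg) hinjOn)
  -- if F is not finitely pierceable, then it has an infinite disjoint subfamily
  have key : ¬ PiercedBy F → (∃ S ⊆ F, S.Infinite ∧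
      S.Pairwise (fun b b' =>
        Disjoint (Metric.closedBall b.1 b.2) (Metric.closedBall b'.1 b'.2))) := by
    intro hnp
    by_cases hC : ∀ R : ℝ, ∃ b ∈ F,
        Disjoint (Metric.closedBall b.1 b.2) (Metric.closedBall (0:E) R)
    · exact seq_escape hr hC
    · push_neg at hC
      obtain ⟨R, hR⟩ := hC
      have hheavy : ∃ p : E, ∀ ε : ℝ, 0 < ε →
          ¬ PiercedBy {b ∈ F | Metric.closedBall b.1 b.2 ⊆ Metric.closedBall p ε} := by
        by_contra hall
        push_neg at hall
        choose ε hεpos hεp using hall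
        have hR0 : 0 ≤ R := by
          obtain ⟨b, hb⟩ := hinf.nonempty
          obtain ⟨w, hw1, hw2⟩ := Set.not_disjoint_iff.1 (hR b hb)
          have h1 := Metric.mem_closedBall.1 hw2
          have h2 : (0:ℝ) ≤ dist w (0:E) := dist_nonneg
          linarith
        have hKcov : Metric.closedBall (0:E) (R + 2) ⊆ ⋃ p : E, Metric.ball p (ε p / 2) :=
          fun q _ => Set.mem_iUnion.2 ⟨q, Metric.mem_ball_self (half_pos (hεpos q))⟩
        obtain ⟨t, ht⟩ := (isCompact_closedBall (0:E) (R+2)).elim_finite_subcover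
          (fun p : E => Metric.ball p (ε p / 2)) (fun _ => Metric.isOpen_ball) hKcov
        have htne : t.Nonempty := by
          have h0 : (0:E) ∈ Metric.closedBall (0:E) (R+2) :=
            Metric.mem_closedBall_self (by linarith)
          obtain ⟨p, hp⟩ := Set.mem_iUnion.1 (ht h0)
          obtain ⟨hpt, -⟩ := Set.mem_iUnion.1 hp
          exact ⟨p, hpt⟩
        set δ := min (t.inf' htne fun p => ε p / 2) 1 with hδ
        have hδpos : 0 < δ :=
          lt_min (by rw [Finset.lt_inf'_iff]; exact fun p _ => half_pos (hεpos p)) one_pos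
        have hδ1 : δ ≤ 1 := min_le_right _ _
        apply hnp
        have hsplit : F ⊆ {b : E × ℝ | δ ≤ b.2 ∧
            ¬ Disjoint (Metric.closedBall b.1 b.2) (Metric.closedBall (0:E) R)} ∪
            ⋃ p ∈ t, {b ∈ F | Metric.closedBall b.1 b.2 ⊆ Metric.closedBall p (ε p)} := by
          intro b hb
          rcases le_or_gt δ b.2 with hbig | hsmall
          · exact Or.inl ⟨hbig, hR b hb⟩
          · right
            obtain ⟨w, hw1, hw2⟩ := Set.not_disjoint_iff.1 (hR b hb)
            have hcenter : b.1 ∈ Metric.closedBall (0:E) (R + 2) := by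
              have h1 : dist b.1 w ≤ b.2 := by
                rw [dist_comm]; exact Metric.mem_closedBall.1 hw1
              have h2 : dist w (0:E) ≤ R := Metric.mem_closedBall.1 hw2
              simp only [Metric.mem_closedBall]
              calc dist b.1 (0:E) ≤ dist b.1 w + dist w 0 := dist_triangle _ _ _
                _ ≤ b.2 + R := add_le_add h1 h2
                _ ≤ R + 2 := by linarith
            obtain ⟨p, hp⟩ := Set.mem_iUnion.1 (ht hcenter)
            obtain ⟨hpt, hpz⟩ := Set.mem_iUnion.1 hp
            refine Set.mem_iUnion₂.2 ⟨p, hpt, hb, ?_⟩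
            intro q hq
            have h1 : dist q b.1 ≤ b.2 := Metric.mem_closedBall.1 hq
            have h2 : dist b.1 p < ε p / 2 := Metric.mem_ball.1 hpz
            have h3 : δ ≤ ε p / 2 := (min_le_left _ _).trans (Finset.inf'_le _ hpt)
            simp only [Metric.mem_closedBall]
            calc dist q p ≤ dist q b.1 + dist b.1 p := dist_triangle _ _ _
              _ ≤ b.2 + ε p / 2 := by linarith [h2.le]
              _ ≤ ε p := by linarith
        exact piercedBy_mono hsplit (piercedBy_union (piercedBy_big hδpos)
          (piercedBy_biUnion t _ fun p _ => hεp p))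
      obtain ⟨p, hp⟩ := hheavy
      apply seq_shrink hr p
      intro ε hε
      by_contra hcon
      push_neg at hcon
      apply hp ε hε
      refine ⟨{p}, Set.finite_singleton p, ?_⟩
      rintro b ⟨hbF, hbsub⟩
      exact ⟨p, rfl, hcon b hbF hbsub⟩
  by_cases hA : PiercedBy F
  · exact Or.inl ⟨hA, fun hB => hnot ⟨hA, hB⟩⟩
  · exact Or.inr ⟨key hA, fun hA' => hA hA'⟩

/-- Every infinite family of closed balls (of positive radii) in `ℝ^d`, represented by
center–radius pairs, satisfies exactly one of: (1) it can be pierced by a finite set of points;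
(2) it contains an infinite subfamily of pairwise disjoint balls. -/
theorem point_piercing_dichotomy (d : ℕ)
    (F : Set (EuclideanSpace ℝ (Fin d) × ℝ)) (hinf : F.Infinite)
    (hr : ∀ b ∈ F, 0 < b.2) :
    Xor'
      (∃ P : Set (EuclideanSpace ℝ (Fin d)), P.Finite ∧
        ∀ b ∈ F, ∃ p ∈ P, p ∈ Metric.closedBall b.1 b.2)
      (∃ S ⊆ F, S.Infinite ∧
        S.Pairwise (fun b b' =>
          Disjoint (Metric.closedBall b.1 b.2) (Metric.closedBall b'.1 b'.2))) :=
  dichotomy_aux F hinf hr
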